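/- Let L, R be real numbers with 0 < L < 1, R > 0 and (1−L)² = 4R (equivalently 2L − L² + 4R = 1). Then the family (ℓ, m) ∈ ℕ×ℕ ↦ m·B_{ℓ,m}·L^ℓ·R^m is not summable. -/

import Mathlib

/-- The Motzkin-bridge trinomial coefficient `B_{ℓ,m} = (ℓ+2m)! / (ℓ!·m!·m!)`. -/
def Bcoef (l m : ℕ) : ℕ :=
  (l + 2 * m).factorial / (l.factorial * m.factorial * m.factorial)

lemma Bcoef_eq (l m : ℕ) :
    Bcoef l m = (l + 2 * m).choose (2 * m) * (2 * m).choose m := by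
  have h1 : (l + 2 * m).choose (2 * m) * (2 * m).factorial * l.factorial
      = (l + 2 * m).factorial := by
    have := Nat.choose_mul_factorial_mul_factorial (Nat.le_add_left (2 * m) l)
    simpa using this
  have h2 : (2 * m).choose m * m.factorial * m.factorial = (2 * m).factorial := by
    have := Nat.choose_mul_factorial_mul_factorial (show m ≤ 2 * m by omega)
    simpa [two_mul] using this
  have hN : (l + 2 * m).factorial
      = ((l + 2 * m).choose (2 * m) * (2 * m).choose m)
        * (l.factorial * m.factorial * m.factorial) := by
    rw [← h1, ← h2]; ring
  have hD : 0 < l.factorial * m.factorial * m.factorial := by positivity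
  rw [Bcoef, hN, Nat.mul_div_cancel _ hD]

/-- At the critical point `(1−L)² = 4R` (with `0 < L < 1`, `R > 0`), the family
`m·B_{ℓ,m}·L^ℓ·R^m` is not summable. -/
theorem not_summable_at_critical_point (L R : ℝ) (hL0 : 0 < L) (hL1 : L < 1)
    (hR : 0 < R) (hcrit : (1 - L) ^ 2 = 4 * R) :
    ¬ Summable (fun p : ℕ × ℕ => (p.2 : ℝ) * (Bcoef p.1 p.2 : ℝ) * L ^ p.1 * R ^ p.2) := by
  intro h
  set u : ℝ := 1 - L with hu_def
  have hu : 0 < u := by simp [hu_def]; linarith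
  set f : ℕ × ℕ → ℝ := fun p => (p.2 : ℝ) * (Bcoef p.1 p.2 : ℝ) * L ^ p.1 * R ^ p.2 with hf
  have hnn : ∀ p : ℕ × ℕ, 0 ≤ f (p.2, p.1) := by
    intro p; simp only [hf]; positivity
  have hswap : Summable fun p : ℕ × ℕ => f (p.2, p.1) :=
    ((Equiv.prodComm ℕ ℕ).summable_iff).2 h
  have h2 := (summable_prod_of_nonneg hnn).1 hswap
  set g : ℕ → ℝ := fun m => ∑' l : ℕ, f (l, m) with hg_def
  have hgsum : Summable g := h2.2
  have hLnorm : ‖L‖ < 1 := by rw [Real.norm_eq_abs, abs_of_pos hL0]; exact hL1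
  -- compute g m
  have hg : ∀ m : ℕ, g m = (m : ℝ) * ((2 * m).choose m : ℝ) * R ^ m * (1 / u ^ (2 * m + 1)) := by
    intro m
    have hs : HasSum (fun l : ℕ => f (l, m))
        (((m : ℝ) * ((2 * m).choose m : ℝ) * R ^ m) * (1 / (1 - L) ^ (2 * m + 1))) := by
      have hbase := (hasSum_choose_mul_geometric_of_norm_lt_one (𝕜 := ℝ) (2 * m) hLnorm)
      have := hbase.mul_left ((m : ℝ) * ((2 * m).choose m : ℝ) * R ^ m)
      convert this using 2 with l
      · rfl
      simp only [hf, Bcoef_eq]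
      push_cast
      ring
    rw [← hu_def] at hs
    exact hs.tsum_eq
  -- lower bound for m ≥ 1
  have key : ∀ m : ℕ, 1 ≤ m → 1 / (3 * u) ≤ g m := by
    intro m hm
    rw [hg m]
    have hRm0 : (4:ℝ) ^ m * R ^ m = u ^ (2 * m) := by
      rw [← mul_pow, ← hcrit, ← pow_mul]
    have hRm : R ^ m = u ^ (2 * m) / 4 ^ m := by
      rw [eq_div_iff (by positivity : ((4:ℝ) ^ m) ≠ 0)]
      linear_combination hRm0
    have hupow : (0:ℝ) < u ^ (2 * m) := by positivity
    have hform : (m : ℝ) * ((2 * m).choose m : ℝ) * R ^ m * (1 / u ^ (2 * m + 1))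
        = ((m : ℝ) * ((2 * m).choose m : ℝ)) / (4 ^ m * u) := by
      rw [hRm, pow_succ]
      field_simp
    rw [hform]
    have hnat : 4 ^ m ≤ 3 * m * ((2 * m).choose m) := by
      calc 4 ^ m ≤ (2 * m + 1) * (2 * m).choose m :=
            Nat.four_pow_le_two_mul_add_one_mul_central_binom m
        _ ≤ 3 * m * ((2 * m).choose m) := Nat.mul_le_mul_right _ (by omega)
    have hnat' : (4:ℝ) ^ m ≤ 3 * m * ((2 * m).choose m : ℝ) := by
      exact_mod_cast hnat
    rw [div_le_div_iff₀ (by positivity) (by positivity)]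
    calc 1 * (4 ^ m * u) = (4:ℝ) ^ m * u := by ring
      _ ≤ (3 * m * ((2 * m).choose m : ℝ)) * u :=
          mul_le_mul_of_nonneg_right hnat' hu.le
      _ = (m : ℝ) * ((2 * m).choose m : ℝ) * (3 * u) := by ring
  -- contradiction with g → 0
  have htend : Filter.Tendsto g Filter.atTop (nhds 0) := hgsum.tendsto_atTop_zero
  have hpos : (0:ℝ) < 1 / (3 * u) := by positivity
  have hev : ∀ᶠ m in Filter.atTop, g m < 1 / (3 * u) :=
    htend.eventually (gt_mem_nhds hpos)
  obtain ⟨m, hm1, hm2⟩ := (hev.and (Filter.eventually_ge_atTop 1)).exists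
  exact absurd (key m hm2) (not_le.2 hm1)
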